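/- arXiv:1406.4253 — 7 statements merged into one kernel-verified Lean document; each statement's English description precedes it below -/
import Mathlib

section
/- Let E be a complex normed vector space, let r be a positive integer, let Q : E → ℂ be homogeneous of degree r and differentiable (over ℂ), let F : E → ℂ be differentiable (over ℂ), and let a ∈ ℂ. Define W(p, x) = p * Q(x) − a * p + F(x) on ℂ × E, and for a real number ε > 0 define the rescaled perturbed superpotential W_ε(p, x) = p * Q(x) − ε^r * a * p + ε^r * F(ε⁻¹ • x). If (p, x) is a critical point of W (fderiv ℂ W (p, x) = 0), then (p, ε • x) is a critical point of W_ε (fderiv ℂ W_ε (p, ε • x) = 0). -/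
/-- Lemma 3.2(1): if `(p, x)` is a critical point of the perturbed
superpotential `W (p, x) = p * Q x - a * p + F x`, then `(p, ε • x)` is a
critical point of the rescaled perturbed superpotential
`W_ε (p, x) = p * Q x - ε^r * a * p + ε^r * F (ε⁻¹ • x)`. -/
theorem critical_point_rescaled_perturbation
    {E : Type*} [NormedAddCommGroup E] [NormedSpace ℂ E]
    (r : ℕ) (hr : 0 < r) (Q : E → ℂ)
    (hQhom : ∀ (c : ℂ) (x : E), Q (c • x) = c ^ r * Q x)
    (hQ : Differentiable ℂ Q) (F : E → ℂ) (hF : Differentiable ℂ F) (a : ℂ)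
    (ε : ℝ) (hε : 0 < ε)
    (W Wε : ℂ × E → ℂ)
    (hW : ∀ (p : ℂ) (x : E), W (p, x) = p * Q x - a * p + F x)
    (hWε : ∀ (p : ℂ) (x : E),
      Wε (p, x) = p * Q x - (ε : ℂ) ^ r * a * p + (ε : ℂ) ^ r * F ((ε : ℂ)⁻¹ • x))
    (p : ℂ) (x : E) (hcrit : fderiv ℂ W (p, x) = 0) :
    fderiv ℂ Wε (p, (ε : ℂ) • x) = 0 := by
  have hε0 : (ε : ℂ) ≠ 0 := by
    exact_mod_cast hε.ne'
  set L : ℂ × E →L[ℂ] ℂ × E :=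
    (ContinuousLinearMap.id ℂ ℂ).prodMap ((ε : ℂ)⁻¹ • ContinuousLinearMap.id ℂ E) with hL
  have hLapp : ∀ z : ℂ × E, L z = (z.1, (ε : ℂ)⁻¹ • z.2) := by
    intro z; rfl
  have hWfun : W = fun z : ℂ × E => z.1 * Q z.2 - a * z.1 + F z.2 := by
    funext z; obtain ⟨p', y⟩ := z; exact hW p' y
  have hWdiff : Differentiable ℂ W := by
    rw [hWfun]
    exact Differentiable.add
      (Differentiable.sub
        (Differentiable.mul differentiable_fst (hQ.comp differentiable_snd))
        ((differentiable_const a).mul differentiable_fst))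
      (hF.comp differentiable_snd)
  have hpow : (ε : ℂ) ^ r * ((ε : ℂ)⁻¹) ^ r = 1 := by
    rw [← mul_pow, mul_inv_cancel₀ hε0, one_pow]
  have hWεeq : Wε = fun z : ℂ × E => (ε : ℂ) ^ r * W (L z) := by
    funext z
    obtain ⟨p', y⟩ := z
    rw [hWε, hLapp, hW]
    simp only
    have hq : (ε : ℂ) ^ r * Q ((ε : ℂ)⁻¹ • y) = Q y := by
      rw [hQhom, ← mul_assoc, hpow, one_mul]
    rw [← hq]
    ring
  rw [hWεeq]
  have hdcomp : DifferentiableAt ℂ (fun z => W (L z)) (p, (ε : ℂ) • x) :=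
    (hWdiff.comp L.differentiable) _
  rw [fderiv_const_mul hdcomp]
  have : fderiv ℂ (fun z => W (L z)) (p, (ε : ℂ) • x)
      = (fderiv ℂ W (L (p, (ε : ℂ) • x))).comp L := by
    exact fderiv_comp _ (hWdiff _) L.differentiableAt |>.trans (by rw [L.fderiv])
  rw [this]
  have hLpt : L (p, (ε : ℂ) • x) = (p, x) := by
    rw [hLapp]
    rw [Prod.mk.injEq]
    refine ⟨rfl, ?_⟩
    rw [smul_smul, inv_mul_cancel₀ hε0, one_smul]
  rw [hLpt, hcrit]
  simp
  ext z <;> simp [ContinuousLinearMap.comp_apply, ContinuousLinearMap.smul_apply]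
end

section
/- Let E be a complex normed vector space, let r be a positive integer, let Q : E → ℂ be homogeneous of degree r and differentiable (over ℂ), let F : E → ℂ be differentiable (over ℂ), and let a ∈ ℂ. Define W(p, x) = p * Q(x) − a * p + F(x) and, for real ε > 0, W_ε(p, x) = p * Q(x) − ε^r * a * p + ε^r * F(ε⁻¹ • x). Then the map (p, x) ↦ (p, ε • x) is a bijection from the critical set {(p, x) : fderiv ℂ W (p, x) = 0} onto the critical set {(p, x) : fderiv ℂ W_ε (p, x) = 0}. -/
/-- The map `(p, x) ↦ (p, ε • x)` is a bijection from the critical set of the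
perturbed superpotential `W` onto the critical set of the rescaled perturbed
superpotential `W_ε`. -/
theorem rescaling_bijOn_critical_sets
    {E : Type*} [NormedAddCommGroup E] [NormedSpace ℂ E]
    (r : ℕ) (hr : 0 < r) (Q : E → ℂ)
    (hQhom : ∀ (c : ℂ) (x : E), Q (c • x) = c ^ r * Q x)
    (hQ : Differentiable ℂ Q) (F : E → ℂ) (hF : Differentiable ℂ F) (a : ℂ)
    (ε : ℝ) (hε : 0 < ε)
    (W Wε : ℂ × E → ℂ)
    (hW : ∀ (p : ℂ) (x : E), W (p, x) = p * Q x - a * p + F x)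
    (hWε : ∀ (p : ℂ) (x : E),
      Wε (p, x) = p * Q x - (ε : ℂ) ^ r * a * p + (ε : ℂ) ^ r * F ((ε : ℂ)⁻¹ • x)) :
    Set.BijOn (fun z : ℂ × E => (z.1, (ε : ℂ) • z.2))
      {z : ℂ × E | fderiv ℂ W z = 0} {z : ℂ × E | fderiv ℂ Wε z = 0} := by
  set c : ℂ := (ε : ℂ) with hc_def
  have hc : c ≠ 0 := by
    simp [hc_def, Complex.ofReal_ne_zero, ne_of_gt hε]
  have hcr : c ^ r ≠ 0 := pow_ne_zero _ hc
  -- the scaling continuous linear equiv `x ↦ c⁻¹ • x`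
  let S : E ≃L[ℂ] E :=
    { LinearEquiv.smulOfNeZero ℂ E c⁻¹ (inv_ne_zero hc) with
      continuous_toFun := continuous_const_smul _
      continuous_invFun := continuous_const_smul _ }
  have hS : ∀ x : E, S x = c⁻¹ • x := fun _ => rfl
  have hSsymm : ∀ x : E, S.symm x = c • x := fun x => by
    rw [ContinuousLinearEquiv.symm_apply_eq, hS, inv_smul_smul₀ hc]
  let iso : (ℂ × E) ≃L[ℂ] (ℂ × E) := (ContinuousLinearEquiv.refl ℂ ℂ).prodCongr S
  have hiso : ∀ z : ℂ × E, iso z = (z.1, c⁻¹ • z.2) := fun _ => rfl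
  -- W is differentiable
  have hWfun : W = fun z : ℂ × E => z.1 * Q z.2 - a * z.1 + F z.2 := by
    funext z; exact hW z.1 z.2
  have hWdiff : Differentiable ℂ W := by
    rw [hWfun]
    exact ((differentiable_fst.mul (hQ.comp differentiable_snd)).sub
      (differentiable_fst.const_mul a)).add (hF.comp differentiable_snd)
  -- the key identity: Wε = c^r • (W ∘ iso)
  have hkey : Wε = fun z : ℂ × E => c ^ r • (W ∘ iso) z := by
    funext z
    rcases z with ⟨p, x⟩
    have hQx : Q x = c ^ r * Q (c⁻¹ • x) := by
      have : Q (c • c⁻¹ • x) = c ^ r * Q (c⁻¹ • x) := hQhom c (c⁻¹ • x)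
      rwa [smul_inv_smul₀ hc] at this
    simp only [Function.comp, hiso, hWε, hW, smul_eq_mul]
    rw [hQx]; ring
  -- fderiv of Wε
  have hfd : ∀ z : ℂ × E, fderiv ℂ Wε z
      = c ^ r • ((fderiv ℂ W (iso z)).comp (iso : (ℂ × E) →L[ℂ] (ℂ × E))) := by
    intro z
    have hdiff : DifferentiableAt ℂ (W ∘ iso) z :=
      (hWdiff (iso z)).comp z iso.differentiableAt
    rw [hkey, fderiv_fun_const_smul hdiff (c ^ r), ← iso.comp_right_fderiv]
  -- criticality transfer
  have hcrit : ∀ z : ℂ × E, fderiv ℂ Wε z = 0 ↔ fderiv ℂ W (iso z) = 0 := by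
    intro z
    have h0 : ∀ L : (ℂ × E) →L[ℂ] ℂ, c ^ r • L = 0 ↔ L = 0 := by
      intro L
      constructor
      · intro h
        have := congrArg ((c ^ r)⁻¹ • ·) h
        simp only [smul_smul, inv_mul_cancel₀ hcr, one_smul, smul_zero] at this
        exact this.trans (ContinuousLinearMap.ext fun v => by simp)
      · rintro rfl; exact ContinuousLinearMap.ext fun v => by simp
    rw [hfd z, h0]
    constructor
    · intro h
      refine ContinuousLinearMap.ext fun v => ?_
      have := ContinuousLinearMap.ext_iff.1 h (iso.symm v)
      simpa using this
    · intro h; rw [h]; exact ContinuousLinearMap.zero_comp _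
  have hmiso : ∀ z : ℂ × E, iso (z.1, c • z.2) = z := by
    intro z
    rw [hiso]
    simp [inv_smul_smul₀ hc]
  constructor
  · intro z hz
    simp only [Set.mem_setOf_eq] at hz ⊢
    rw [hcrit, hmiso]
    exact hz
  refine ⟨?_, ?_⟩
  · intro z _ w _ h
    simp only [Prod.mk.injEq] at h
    obtain ⟨h1, h2⟩ := h
    exact Prod.ext h1 (smul_right_injective E hc h2)
  · intro w hw
    simp only [Set.mem_setOf_eq] at hw
    refine ⟨iso w, ?_, ?_⟩
    · exact (hcrit w).1 hw
    · rw [hiso]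
      simp [smul_inv_smul₀ hc]
end

section
/- Let E be a complex normed vector space, let r be a positive integer, let Q : E → ℂ be homogeneous of degree r and differentiable (over ℂ), let F : E → ℂ be differentiable (over ℂ), and let a ∈ ℂ. Define W(p, x) = p * Q(x) − a * p + F(x) and, for real ε > 0, W_ε(p, x) = p * Q(x) − ε^r * a * p + ε^r * F(ε⁻¹ • x). Suppose the perturbation is strongly regular, meaning: for any two critical points z₁, z₂ of W, if Im(W z₁) = Im(W z₂) then W z₁ = W z₂ (distinct critical values of W have distinct imaginary parts). Then the rescaled perturbation is also strongly regular: for any two critical points z₁, z₂ of W_ε, if Im(W_ε z₁) = Im(W_ε z₂) then W_ε z₁ = W_ε z₂. -/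
/-- Scalar multiplication by a nonzero complex number as a continuous linear
equivalence. -/
noncomputable def smulCLE {E : Type*} [NormedAddCommGroup E] [NormedSpace ℂ E]
    (c : ℂ) (hc : c ≠ 0) : E ≃L[ℂ] E :=
  { LinearEquiv.smulOfNeZero ℂ E c hc with
    continuous_toFun := continuous_const_smul c
    continuous_invFun := continuous_const_smul c⁻¹ }

@[simp] lemma smulCLE_apply {E : Type*} [NormedAddCommGroup E] [NormedSpace ℂ E]
    (c : ℂ) (hc : c ≠ 0) (x : E) : smulCLE c hc x = c • x := rfl

/-- If the perturbation `(a, F)` is strongly regular (distinct critical values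
of `W` have distinct imaginary parts), then the rescaled perturbation
`(ε^r a, ε^r F^ε)` is also strongly regular. -/
theorem rescaled_perturbation_strongly_regular
    {E : Type*} [NormedAddCommGroup E] [NormedSpace ℂ E]
    (r : ℕ) (hr : 0 < r) (Q : E → ℂ)
    (hQhom : ∀ (c : ℂ) (x : E), Q (c • x) = c ^ r * Q x)
    (hQ : Differentiable ℂ Q) (F : E → ℂ) (hF : Differentiable ℂ F) (a : ℂ)
    (ε : ℝ) (hε : 0 < ε)
    (W Wε : ℂ × E → ℂ)
    (hW : ∀ (p : ℂ) (x : E), W (p, x) = p * Q x - a * p + F x)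
    (hWε : ∀ (p : ℂ) (x : E),
      Wε (p, x) = p * Q x - (ε : ℂ) ^ r * a * p + (ε : ℂ) ^ r * F ((ε : ℂ)⁻¹ • x))
    (hreg : ∀ z₁ z₂ : ℂ × E, fderiv ℂ W z₁ = 0 → fderiv ℂ W z₂ = 0 →
      (W z₁).im = (W z₂).im → W z₁ = W z₂) :
    ∀ z₁ z₂ : ℂ × E, fderiv ℂ Wε z₁ = 0 → fderiv ℂ Wε z₂ = 0 →
      (Wε z₁).im = (Wε z₂).im → Wε z₁ = Wε z₂ := by
  have hcne : (ε : ℂ) ≠ 0 := by exact_mod_cast hε.ne'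
  have hcinv : (ε : ℂ)⁻¹ ≠ 0 := inv_ne_zero hcne
  have hcr : (ε : ℂ) ^ r ≠ 0 := pow_ne_zero _ hcne
  set L : (ℂ × E) ≃L[ℂ] (ℂ × E) :=
    (ContinuousLinearEquiv.refl ℂ ℂ).prodCongr (smulCLE ((ε : ℂ)⁻¹) hcinv) with hL
  have hLapp : ∀ z : ℂ × E, L z = (z.1, (ε : ℂ)⁻¹ • z.2) := fun z => rfl
  -- W is differentiable
  have hWfun : W = fun z : ℂ × E => z.1 * Q z.2 - a * z.1 + F z.2 := by
    funext z; exact hW z.1 z.2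
  have hWdiff : Differentiable ℂ W := by
    rw [hWfun]
    exact (((differentiable_fst.mul (hQ.comp differentiable_snd)).sub
      ((differentiable_const a).mul differentiable_fst)).add (hF.comp differentiable_snd))
  -- rescaling identity
  have hkey : Wε = fun z : ℂ × E => (ε : ℂ) ^ r * W (L z) := by
    funext z
    obtain ⟨p, x⟩ := z
    rw [hWε, hLapp, hW]
    simp only [hQhom]
    field_simp
    have h : (ε : ℂ) ^ r * (1 / (ε : ℂ)) ^ r = 1 := by
      rw [← mul_pow, mul_one_div_cancel hcne, one_pow]
    linear_combination (-(p * Q x)) * h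
  -- fderiv relation
  have hfd : ∀ z : ℂ × E,
      fderiv ℂ Wε z = (ε : ℂ) ^ r • ((fderiv ℂ W (L z)).comp (L : ℂ × E →L[ℂ] ℂ × E)) := by
    intro z
    have h1 : fderiv ℂ (W ∘ L) z = (fderiv ℂ W (L z)).comp (L : ℂ × E →L[ℂ] ℂ × E) :=
      L.comp_right_fderiv
    have h2 : DifferentiableAt ℂ (W ∘ L) z :=
      (hWdiff (L z)).comp z L.differentiableAt
    calc fderiv ℂ Wε z = fderiv ℂ (fun w => (ε : ℂ) ^ r * (W ∘ L) w) z := by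
          rw [hkey]; rfl
      _ = (ε : ℂ) ^ r • fderiv ℂ (W ∘ L) z := fderiv_const_mul h2 _
      _ = _ := by rw [h1]
  -- critical points correspond
  have hcrit : ∀ z : ℂ × E, fderiv ℂ Wε z = 0 → fderiv ℂ W (L z) = 0 := by
    intro z hz
    have h := (hfd z).symm.trans hz
    have h3 : (fderiv ℂ W (L z)).comp (L : ℂ × E →L[ℂ] ℂ × E) = 0 :=
      (smul_eq_zero.mp h).resolve_left hcr
    refine ContinuousLinearMap.ext fun v => ?_
    have h4 := congrArg (fun (T : (ℂ × E) →L[ℂ] ℂ) => T (L.symm v)) h3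
    simpa using h4
  intro z₁ z₂ h₁ h₂ him
  have hv₁ : Wε z₁ = (ε : ℂ) ^ r * W (L z₁) := by rw [hkey]
  have hv₂ : Wε z₂ = (ε : ℂ) ^ r * W (L z₂) := by rw [hkey]
  have hcast : (ε : ℂ) ^ r = ((ε ^ r : ℝ) : ℂ) := by push_cast; ring
  have himW : (W (L z₁)).im = (W (L z₂)).im := by
    rw [hv₁, hv₂, hcast] at him
    simp only [Complex.mul_im, Complex.ofReal_re, Complex.ofReal_im, zero_mul, add_zero] at him
    exact mul_left_cancel₀ (pow_ne_zero _ hε.ne') him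
  have := hreg (L z₁) (L z₂) (hcrit z₁ h₁) (hcrit z₂ h₂) himW
  rw [hv₁, hv₂, this]
end

section
/- Let E be a complex normed vector space, let r be a positive integer, let Q : E → ℂ be homogeneous of degree r and differentiable (over ℂ), let F : E → ℂ be differentiable (over ℂ), and let a ∈ ℂ. For ξ ∈ ℂ with ξ ≠ 0, define W(p, x) = p * Q(x) − a * p + F(x) and W'(p, x) = p * Q(x) − (ξ^r * a) * p + F(ξ⁻¹ • x). Then the map (p, x) ↦ (ξ^{−r} * p, ξ • x) is a bijection from the critical set of W onto the critical set of W', and it preserves critical values: W'(ξ^{−r} * p, ξ • x) = W(p, x). In particular, if all distinct critical values of W have distinct imaginary parts, then the same holds for W'. -/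
@[simp] lemma smulCLE_symm_apply {E : Type*} [NormedAddCommGroup E] [NormedSpace ℂ E]
    (c : ℂ) (hc : c ≠ 0) (x : E) : (smulCLE c hc).symm x = c⁻¹ • x := rfl

/-- Angular part of the perturbation: the map `(p, x) ↦ (ξ^(-r) * p, ξ • x)` is
a bijection from the critical set of `W` onto that of `W'`, it preserves the
critical values, and consequently strong regularity of `W` implies that of `W'`. -/
theorem angular_rescaling_critical_points
    {E : Type*} [NormedAddCommGroup E] [NormedSpace ℂ E]
    (r : ℕ) (hr : 0 < r) (Q : E → ℂ)
    (hQhom : ∀ (c : ℂ) (x : E), Q (c • x) = c ^ r * Q x)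
    (hQ : Differentiable ℂ Q) (F : E → ℂ) (hF : Differentiable ℂ F) (a : ℂ)
    (ξ : ℂ) (hξ : ξ ≠ 0)
    (W W' : ℂ × E → ℂ)
    (hW : ∀ (p : ℂ) (x : E), W (p, x) = p * Q x - a * p + F x)
    (hW' : ∀ (p : ℂ) (x : E), W' (p, x) = p * Q x - (ξ ^ r * a) * p + F (ξ⁻¹ • x)) :
    Set.BijOn (fun z : ℂ × E => (ξ ^ (-(r : ℤ)) * z.1, ξ • z.2))
      {z : ℂ × E | fderiv ℂ W z = 0} {z : ℂ × E | fderiv ℂ W' z = 0} ∧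
    (∀ (p : ℂ) (x : E), W' (ξ ^ (-(r : ℤ)) * p, ξ • x) = W (p, x)) ∧
    ((∀ z₁ z₂ : ℂ × E, fderiv ℂ W z₁ = 0 → fderiv ℂ W z₂ = 0 →
        (W z₁).im = (W z₂).im → W z₁ = W z₂) →
      ∀ z₁ z₂ : ℂ × E, fderiv ℂ W' z₁ = 0 → fderiv ℂ W' z₂ = 0 →
        (W' z₁).im = (W' z₂).im → W' z₁ = W' z₂) := by
  have hξr : ξ ^ r ≠ 0 := pow_ne_zero _ hξ
  have hzpow : ξ ^ (-(r : ℤ)) = (ξ ^ r)⁻¹ := by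
    rw [zpow_neg, zpow_natCast]
  -- the rescaling linear equivalence ψ(p, x) = (ξ^r * p, ξ⁻¹ • x)
  set ψ : (ℂ × E) ≃L[ℂ] (ℂ × E) := (smulCLE (ξ ^ r) hξr).prodCongr (smulCLE ξ⁻¹ (inv_ne_zero hξ))
    with hψdef
  have hψ : ∀ z : ℂ × E, ψ z = (ξ ^ r * z.1, ξ⁻¹ • z.2) := fun z => by
    simp [hψdef, smul_eq_mul]
  have hψs : ∀ z : ℂ × E, ψ.symm z = (ξ ^ (-(r : ℤ)) * z.1, ξ • z.2) := fun z => by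
    simp [hψdef, ContinuousLinearEquiv.prodCongr_symm, ContinuousLinearEquiv.prodCongr_apply,
      smul_eq_mul, hzpow, inv_inv]
  -- W' = W ∘ ψ
  have hcomp : W' = W ∘ ψ := by
    funext z
    obtain ⟨p, x⟩ := z
    rw [Function.comp_apply, hψ, hW' p x]
    simp only
    rw [hW, hQhom ξ⁻¹ x]
    have : ξ ^ r * p * ((ξ⁻¹) ^ r * Q x) = p * Q x := by
      field_simp
      rw [one_div, inv_pow, mul_comm (ξ ^ r) p, mul_inv_cancel_right₀ hξr]
    rw [this]; ring_nf
  -- derivative relation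
  have hder : ∀ z : ℂ × E, fderiv ℂ W' z = (fderiv ℂ W (ψ z)).comp (ψ : (ℂ × E) →L[ℂ] (ℂ × E)) := by
    intro z
    rw [hcomp]
    exact ψ.comp_right_fderiv
  have hzero : ∀ z : ℂ × E, fderiv ℂ W' z = 0 ↔ fderiv ℂ W (ψ z) = 0 := by
    intro z
    rw [hder]
    constructor
    · intro h
      have h2 := congrArg
        (fun L : (ℂ × E) →L[ℂ] ℂ => L.comp (ψ.symm : (ℂ × E) →L[ℂ] (ℂ × E))) h
      simpa [ContinuousLinearMap.comp_assoc, ψ.coe_comp_coe_symm] using h2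
    · intro h; rw [h, ContinuousLinearMap.zero_comp]
  -- critical value preservation
  have hval : ∀ (p : ℂ) (x : E), W' (ξ ^ (-(r : ℤ)) * p, ξ • x) = W (p, x) := by
    intro p x
    have : (ξ ^ (-(r : ℤ)) * p, ξ • x) = ψ.symm (p, x) := (hψs (p, x)).symm
    rw [this, hcomp, Function.comp_apply, ψ.apply_symm_apply]
  refine ⟨⟨?_, ?_, ?_⟩, hval, ?_⟩
  · -- maps to
    intro z hz
    simp only [Set.mem_setOf_eq] at hz ⊢
    rw [← hψs z, hzero, ψ.apply_symm_apply]
    exact hz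
  · -- injectivity
    intro z₁ _ z₂ _ h
    have h1 : ψ.symm z₁ = ψ.symm z₂ := by rw [hψs z₁, hψs z₂]; exact h
    exact ψ.symm.injective h1
  · -- surjectivity
    intro w hw
    refine ⟨ψ w, ?_, ?_⟩
    · simp only [Set.mem_setOf_eq] at hw ⊢
      exact (hzero w).mp hw
    · show (ξ ^ (-(r : ℤ)) * (ψ w).1, ξ • (ψ w).2) = w
      rw [← hψs (ψ w), ψ.symm_apply_apply]
  · -- strong regularity transfer
    intro hreg z₁ z₂ h₁ h₂ him
    have e₁ : W' z₁ = W (ψ z₁) := by rw [hcomp]; rfl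
    have e₂ : W' z₂ = W (ψ z₂) := by rw [hcomp]; rfl
    rw [e₁, e₂] at him ⊢
    exact hreg _ _ ((hzero z₁).mp h₁) ((hzero z₂).mp h₂) him
end

section
/- Let E be a complex normed vector space, let Q, F : E → ℂ be differentiable (over ℂ), and let a ∈ ℂ be such that fderiv ℂ Q x ≠ 0 for every x with Q(x) = a (i.e. a is a regular value of Q). Define W(p, x) = p * Q(x) − a * p + F(x) on ℂ × E. Then the projection (p, x) ↦ x is a bijection from the critical set {(p, x) : fderiv ℂ W (p, x) = 0} onto the set of constrained critical points of F on the level set Q⁻¹({a}), namely {x : Q(x) = a and (fderiv ℂ F x) v = 0 for all v ∈ E with (fderiv ℂ Q x) v = 0}. -/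
/-- Over a regular value `a` of `Q`, the projection `(p, x) ↦ x` is a bijection
from the critical set of the Lagrange-multiplier superpotential
`W (p, x) = p * Q x - a * p + F x` onto the set of constrained critical points
of `F` on the level set `Q⁻¹ {a}`. -/
theorem lagrange_multiplier_critical_points_bijOn
    {E : Type*} [NormedAddCommGroup E] [NormedSpace ℂ E]
    (Q F : E → ℂ) (hQ : Differentiable ℂ Q) (hF : Differentiable ℂ F) (a : ℂ)
    (ha : ∀ x : E, Q x = a → fderiv ℂ Q x ≠ 0)
    (W : ℂ × E → ℂ)
    (hW : ∀ (p : ℂ) (x : E), W (p, x) = p * Q x - a * p + F x) :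
    Set.BijOn (fun z : ℂ × E => z.2)
      {z : ℂ × E | fderiv ℂ W z = 0}
      {x : E | Q x = a ∧ ∀ v : E, fderiv ℂ Q x v = 0 → fderiv ℂ F x v = 0} := by
  -- The explicit derivative of W at (p, x)
  have key : ∀ (p : ℂ) (x : E),
      fderiv ℂ W (p, x) =
        (Q x - a) • (ContinuousLinearMap.fst ℂ ℂ E) +
          (p • fderiv ℂ Q x + fderiv ℂ F x).comp (ContinuousLinearMap.snd ℂ ℂ E) := by
    intro p x
    have h1 : HasFDerivAt (fun z : ℂ × E => z.1)
        (ContinuousLinearMap.fst ℂ ℂ E) (p, x) := hasFDerivAt_fst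
    have h2 : HasFDerivAt (fun z : ℂ × E => Q z.2)
        ((fderiv ℂ Q x).comp (ContinuousLinearMap.snd ℂ ℂ E)) (p, x) :=
      ((hQ x).hasFDerivAt).comp _ hasFDerivAt_snd
    have h3 : HasFDerivAt (fun z : ℂ × E => F z.2)
        ((fderiv ℂ F x).comp (ContinuousLinearMap.snd ℂ ℂ E)) (p, x) :=
      ((hF x).hasFDerivAt).comp _ hasFDerivAt_snd
    have hap : HasFDerivAt (fun z : ℂ × E => a * z.1)
        (a • ContinuousLinearMap.fst ℂ ℂ E) (p, x) := by
      simpa using h1.const_mul a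
    have htot := ((h1.mul h2).sub hap).add h3
    have heq : W = fun z : ℂ × E => z.1 * Q z.2 - a * z.1 + F z.2 := by
      funext z
      rw [show z = (z.1, z.2) from rfl, hW z.1 z.2]
    rw [heq]
    rw [HasFDerivAt.fderiv (f := fun z : ℂ × E => z.1 * Q z.2 - a * z.1 + F z.2) htot]
    ext v
    · simp [ContinuousLinearMap.smul_apply]
    · simp [ContinuousLinearMap.smul_apply]
  -- criticality characterization
  have crit : ∀ (p : ℂ) (x : E), fderiv ℂ W (p, x) = 0 ↔
      (Q x = a ∧ ∀ v : E, p * fderiv ℂ Q x v + fderiv ℂ F x v = 0) := by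
    intro p x
    rw [key p x]
    constructor
    · intro h
      have h1 := congrArg (fun L => L ((1 : ℂ), (0 : E))) h
      simp at h1
      have hQa : Q x = a := by linear_combination h1
      refine ⟨hQa, fun v => ?_⟩
      have h2 := congrArg (fun L => L ((0 : ℂ), v)) h
      simp at h2
      linear_combination h2
    · rintro ⟨hQa, hv⟩
      ext v
      · simp [hQa]
      · simpa using hv v
  constructor
  · -- MapsTo
    rintro ⟨p, x⟩ hz
    obtain ⟨hQa, hv⟩ := (crit p x).mp hz
    refine ⟨hQa, fun v hv0 => ?_⟩
    have := hv v
    simp only at hv0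
    rw [hv0] at this
    linear_combination this
  constructor
  · -- InjOn
    rintro ⟨p1, x1⟩ hz1 ⟨p2, x2⟩ hz2 hx
    simp only at hx
    subst hx
    obtain ⟨hQa, hv1⟩ := (crit p1 x1).mp hz1
    obtain ⟨_, hv2⟩ := (crit p2 x1).mp hz2
    have hne := ha x1 hQa
    obtain ⟨v, hv⟩ : ∃ v, fderiv ℂ Q x1 v ≠ 0 := by
      by_contra h
      push_neg at h
      exact hne (ContinuousLinearMap.ext fun v => h v)
    have : p1 * fderiv ℂ Q x1 v = p2 * fderiv ℂ Q x1 v := by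
      have h1 := hv1 v
      have h2 := hv2 v
      linear_combination h1 - h2
    have hp : p1 = p2 := mul_right_cancel₀ hv this
    simp [hp]
  · -- SurjOn
    rintro x ⟨hQa, hker⟩
    have hne := ha x hQa
    obtain ⟨v0, hv0⟩ : ∃ v, fderiv ℂ Q x v ≠ 0 := by
      by_contra h
      push_neg at h
      exact hne (ContinuousLinearMap.ext fun v => h v)
    refine ⟨(-(fderiv ℂ F x v0) / fderiv ℂ Q x v0, x), ?_, rfl⟩
    refine (crit _ x).mpr ⟨hQa, fun v => ?_⟩
    set q := fderiv ℂ Q x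
    set f := fderiv ℂ F x
    have hw : q (v - (q v / q v0) • v0) = 0 := by
      simp [map_sub, map_smul]
      field_simp
      ring
    have hfw := hker _ hw
    rw [map_sub, map_smul] at hfw
    have hfv : f v = (q v / q v0) * f v0 := by
      simpa [sub_eq_zero] using hfw
    rw [hfv]
    field_simp
    ring
end

section
/- Let E be a finite-dimensional complex normed vector space, let r be a positive integer, let g : E →ₗ[ℂ] E be a linear map with g^r = id, and let Q : E → ℂ be differentiable (over ℂ) with Q ∘ g = Q. Suppose x ∈ E is fixed by g (g(x) = x) and the derivative of Q at x vanishes on the fixed subspace of g, i.e. (fderiv ℂ Q x) v = 0 for every v ∈ E with g(v) = v. Then fderiv ℂ Q x = 0; that is, x is a critical point of Q itself. In particular, if Q has a unique critical point ★, then ★ is the unique critical point of the restriction of Q to the fixed-point set of g. -/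
/-- For a finite-order linear symmetry `g` (with `g ^ r = id`) of a
differentiable function `Q` on a finite-dimensional complex space: if `x` is
fixed by `g` and the derivative of `Q` at `x` vanishes on the fixed subspace of
`g`, then `x` is a critical point of `Q` itself. -/
theorem critical_point_of_restriction_is_critical
    {E : Type*} [NormedAddCommGroup E] [NormedSpace ℂ E] [FiniteDimensional ℂ E]
    (r : ℕ) (hr : 0 < r) (g : E →ₗ[ℂ] E) (hgr : g ^ r = LinearMap.id)
    (Q : E → ℂ) (hQ : Differentiable ℂ Q) (hg : ∀ x : E, Q (g x) = Q x)
    (x : E) (hx : g x = x)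
    (hfix : ∀ v : E, g v = v → fderiv ℂ Q x v = 0) :
    fderiv ℂ Q x = 0 := by
  set φ := fderiv ℂ Q x with hφ
  have hgc : Differentiable ℂ g := (LinearMap.toContinuousLinearMap g).differentiable
  -- invariance of the derivative: φ ∘ g = φ
  have hinv : ∀ v, φ (g v) = φ v := by
    intro v
    have h2 : (Q ∘ g) = Q := funext hg
    have h1 : fderiv ℂ (Q ∘ g) x = (fderiv ℂ Q (g x)).comp (fderiv ℂ (⇑g) x) :=
      fderiv_comp x (hQ (g x)) (hgc x)
    have h3 : fderiv ℂ (⇑g) x = LinearMap.toContinuousLinearMap g :=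
      (LinearMap.toContinuousLinearMap g).fderiv
    rw [h2, hx, h3] at h1
    exact (DFunLike.congr_fun h1 v).symm
  have hiter : ∀ (n : ℕ) (v : E), φ ((g ^ n) v) = φ v := by
    intro n
    induction n with
    | zero => intro v; rfl
    | succ n ih =>
      intro v
      have : (g ^ (n + 1)) v = (g ^ n) (g v) := by
        rw [pow_succ]; rfl
      rw [this, ih, hinv]
  ext v
  -- the averaged vector
  set w : E := (r : ℂ)⁻¹ • ∑ i ∈ Finset.range r, (g ^ i) v with hw
  have hsum : ∑ i ∈ Finset.range r, (g ^ (i + 1)) v = ∑ i ∈ Finset.range r, (g ^ i) v := by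
    have h := Finset.sum_range_succ' (fun i => (g ^ i) v) r
    rw [Finset.sum_range_succ (fun i => (g ^ i) v) r] at h
    have hgr' : (g ^ r) v = v := by rw [hgr]; rfl
    simp only [hgr', pow_zero, Module.End.one_apply] at h
    exact add_right_cancel h.symm
  have hwfix : g w = w := by
    rw [hw, map_smul, map_sum]
    congr 1
    calc ∑ i ∈ Finset.range r, g ((g ^ i) v)
        = ∑ i ∈ Finset.range r, (g ^ (i + 1)) v := by
          refine Finset.sum_congr rfl fun i _ => ?_
          rw [pow_succ']; rfl
      _ = ∑ i ∈ Finset.range r, (g ^ i) v := hsum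
  have hφw : φ w = φ v := by
    rw [hw, map_smul, map_sum]
    have : ∀ i ∈ Finset.range r, φ ((g ^ i) v) = φ v := fun i _ => hiter i v
    rw [Finset.sum_congr rfl this, Finset.sum_const, Finset.card_range, nsmul_eq_mul,
      smul_eq_mul, ← mul_assoc, inv_mul_cancel₀ (by exact_mod_cast hr.ne' : (r : ℂ) ≠ 0),
      one_mul]
  have h0 := hfix w hwfix
  rw [hφw] at h0
  simpa using h0
end

section
/- Let F : ℂ → ℂ be differentiable on all of ℂ (entire), and let x : ℝ → ℂ be a differentiable, nonconstant map satisfying deriv x t = −conj(deriv F (x t)) for every t ∈ ℝ. Suppose x(t) converges to κ₊ ∈ ℂ as t → +∞ and to κ₋ ∈ ℂ as t → −∞. Then Im(F(κ₊)) = Im(F(κ₋)) and Re(F(κ₊)) < Re(F(κ₋)). -/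
open Filter Complex

/-- Equation (4.2): the asymptotic limits `κ₊`, `κ₋` of a nonconstant BPS
soliton satisfy `Im F κ₊ = Im F κ₋` and `Re F κ₊ < Re F κ₋`. -/
theorem bps_soliton_asymptotics
    (F : ℂ → ℂ) (hF : Differentiable ℂ F)
    (x : ℝ → ℂ) (hx : Differentiable ℝ x)
    (hflow : ∀ t : ℝ, deriv x t = -(starRingEnd ℂ) (deriv F (x t)))
    (hnc : ∃ t₁ t₂ : ℝ, x t₁ ≠ x t₂)
    (κp κm : ℂ)
    (hp : Filter.Tendsto x Filter.atTop (nhds κp))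
    (hm : Filter.Tendsto x Filter.atBot (nhds κm)) :
    (F κp).im = (F κm).im ∧ (F κp).re < (F κm).re := by
  -- derivative of F ∘ x
  have hg : ∀ t : ℝ, HasDerivAt (fun s => F (x s))
      (-(Complex.normSq (deriv F (x t)) : ℂ)) t := by
    intro t
    have h1 : HasDerivAt F (deriv F (x t)) (x t) := (hF (x t)).hasDerivAt
    have h2 : HasDerivAt x (deriv x t) t := (hx t).hasDerivAt
    have := h1.comp t h2
    have heq : deriv F (x t) * deriv x t = -(Complex.normSq (deriv F (x t)) : ℂ) := by
      rw [hflow t, mul_neg, Complex.mul_conj]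
    rwa [heq] at this
  have hre : ∀ t : ℝ, HasDerivAt (fun s => (F (x s)).re)
      (-Complex.normSq (deriv F (x t))) t := by
    intro t
    have := (Complex.reCLM.hasFDerivAt.comp_hasDerivAt t (hg t))
    simpa [Function.comp_def] using this
  have him : ∀ t : ℝ, HasDerivAt (fun s => (F (x s)).im) 0 t := by
    intro t
    have := (Complex.imCLM.hasFDerivAt.comp_hasDerivAt t (hg t))
    simpa [Function.comp_def] using this
  -- Im is constant
  have himconst : ∀ t : ℝ, (F (x t)).im = (F (x 0)).im := by
    intro t
    exact is_const_of_deriv_eq_zero (fun s => (him s).differentiableAt)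
      (fun s => (him s).deriv) t 0
  have htim_p : Tendsto (fun s => (F (x s)).im) atTop (nhds (F κp).im) :=
    (Complex.continuous_im.tendsto _).comp ((hF.continuous.tendsto κp).comp hp)
  have htim_m : Tendsto (fun s => (F (x s)).im) atBot (nhds (F κm).im) :=
    (Complex.continuous_im.tendsto _).comp ((hF.continuous.tendsto κm).comp hm)
  have htre_p : Tendsto (fun s => (F (x s)).re) atTop (nhds (F κp).re) :=
    (Complex.continuous_re.tendsto _).comp ((hF.continuous.tendsto κp).comp hp)
  have htre_m : Tendsto (fun s => (F (x s)).re) atBot (nhds (F κm).re) :=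
    (Complex.continuous_re.tendsto _).comp ((hF.continuous.tendsto κm).comp hm)
  have himp : (F κp).im = (F (x 0)).im :=
    tendsto_nhds_unique htim_p (by simpa [himconst] using
      (tendsto_const_nhds : Tendsto (fun _ : ℝ => (F (x 0)).im) atTop _))
  have himm : (F κm).im = (F (x 0)).im :=
    tendsto_nhds_unique htim_m (by simpa [himconst] using
      (tendsto_const_nhds : Tendsto (fun _ : ℝ => (F (x 0)).im) atBot _))
  -- Re is antitone
  have hanti : Antitone (fun s => (F (x s)).re) := by
    apply antitone_of_deriv_nonpos
    · exact fun s => (hre s).differentiableAt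
    · intro s
      rw [(hre s).deriv]
      simpa using Complex.normSq_nonneg (deriv F (x s))
  have hbp : ∀ t : ℝ, (F κp).re ≤ (F (x t)).re := by
    intro t
    refine le_of_tendsto htre_p ?_
    filter_upwards [eventually_ge_atTop t] with s hs
    exact hanti hs
  have hbm : ∀ t : ℝ, (F (x t)).re ≤ (F κm).re := by
    intro t
    refine ge_of_tendsto htre_m ?_
    filter_upwards [eventually_le_atBot t] with s hs
    exact hanti hs
  refine ⟨himp.trans himm.symm, ?_⟩
  rcases lt_or_eq_of_le ((hbp 0).trans (hbm 0)) with h | h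
  · exact h
  · -- Re constant ⇒ deriv F (x t) = 0 ⇒ x constant, contradiction
    exfalso
    have hreconst : ∀ t : ℝ, (F (x t)).re = (F κp).re := fun t =>
      le_antisymm (by rw [h]; exact hbm t) (hbp t)
    have hzero : ∀ t : ℝ, deriv x t = 0 := by
      intro t
      have h0 : HasDerivAt (fun s => (F (x s)).re) 0 t := by
        have : (fun s : ℝ => (F (x s)).re) = fun _ => (F κp).re := funext hreconst
        rw [this]; exact hasDerivAt_const t _
      have := h0.unique (hre t)
      have hn : Complex.normSq (deriv F (x t)) = 0 := by linarith
      have : deriv F (x t) = 0 := Complex.normSq_eq_zero.mp hn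
      rw [hflow t, this, map_zero, neg_zero]
    obtain ⟨t₁, t₂, hne⟩ := hnc
    exact hne (is_const_of_deriv_eq_zero hx hzero t₁ t₂)
end
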